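/- Let P be a c-regular cd-structure on a category 𝒳 and let 𝒞 be a category. If G : 𝒳^op → 𝒞 is a sheaf for the c-topology τ_P^c, then G sends every distinguished square of P to a pullback square in 𝒞. -/

import Mathlib

open CategoryTheory Limits Opposite

universe w v u

namespace CdFormal

variable {C : Type u} [Category.{v} C] {D : Type w} [Category.{v} D]

/-- A commutative square in `C`: `B → Y`, `B → A`, `p : Y → X`, `i : A → X`. -/
structure CDSquare (C : Type u) [Category.{v} C] where
  B : C
  A : C
  Y : C
  X : C
  e : B ⟶ A
  q : B ⟶ Y
  i : A ⟶ X
  p : Y ⟶ X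
  w : q ≫ p = e ≫ i

/-- The sieve on `X` generated by the feet `{i, p}` of a square. -/
def CDSquare.sieve (Q : CDSquare C) : Sieve Q.X where
  arrows Z g := (∃ h : Z ⟶ Q.A, g = h ≫ Q.i) ∨ (∃ h : Z ⟶ Q.Y, g = h ≫ Q.p)
  downward_closed := by
    rintro Z Z' g (⟨h, rfl⟩ | ⟨h, rfl⟩) g'
    · exact Or.inl ⟨g' ≫ h, by simp⟩
    · exact Or.inr ⟨g' ≫ h, by simp⟩

/-- The c-topology associated to a cd-structure `P`: the coarsest Grothendieck
topology for which the sieve generated by the feet of each distinguished square is covering. -/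
def cTopology (P : Set (CDSquare C)) : GrothendieckTopology C :=
  sInf {J | ∀ Q ∈ P, Q.sieve ∈ J Q.X}

/-- The class of simple `P`-covers. -/
inductive IsSimpleCover (P : Set (CDSquare C)) : (X : C) → Presieve X → Prop
  | iso {X' X : C} (f : X' ⟶ X) (hf : IsIso f) : IsSimpleCover P X (Presieve.singleton f)
  | glue (Q : CDSquare C) (hQ : Q ∈ P) (RY : Presieve Q.Y) (RA : Presieve Q.A)
      (hY : IsSimpleCover P Q.Y RY) (hA : IsSimpleCover P Q.A RA) :
      IsSimpleCover P Q.X (fun Z g =>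
        (∃ h : Z ⟶ Q.Y, RY h ∧ g = h ≫ Q.p) ∨ (∃ h : Z ⟶ Q.A, RA h ∧ g = h ≫ Q.i))

/-- `P` is c-complete: every covering sieve for the associated c-topology contains a
simple `P`-cover. -/
def IsCComplete (P : Set (CDSquare C)) : Prop :=
  ∀ ⦃X : C⦄ (S : Sieve X), S ∈ cTopology P X →
    ∃ R : Presieve X, IsSimpleCover P X R ∧ ∀ ⦃Z⦄ (g : Z ⟶ X), R g → S g

/-- `ρ(X)`: the sheafification of the presheaf represented by `X`. -/
noncomputable def rho (J : GrothendieckTopology C) (X : C) : Sheaf J (Type (max u v)) :=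
  (presheafToSheaf J _).obj (yoneda.obj X ⋙ uliftFunctor.{u})

/-- Functoriality of `ρ`. -/
noncomputable def rhoMap (J : GrothendieckTopology C) {X Y : C} (f : X ⟶ Y) :
    rho J X ⟶ rho J Y :=
  (presheafToSheaf J _).map (Functor.whiskerRight (yoneda.map f) uliftFunctor.{u})

lemma rhoMap_comp (J : GrothendieckTopology C) {X Y Z : C} (f : X ⟶ Y) (g : Y ⟶ Z) :
    rhoMap J (f ≫ g) = rhoMap J f ≫ rhoMap J g := by
  unfold rhoMap
  rw [Functor.map_comp, Functor.whiskerRight_comp]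
  exact Functor.map_comp _ _ _

/-- The canonical comparison morphism
`ρ(Y) ⊔ (ρ(B) ×_{ρ(A)} ρ(B)) ⟶ ρ(Y) ×_{ρ(X)} ρ(Y)` associated to a square. -/
instance sheafTypeHasBinaryCoproducts (J : GrothendieckTopology C) :
    HasColimitsOfShape (Discrete WalkingPair) (Sheaf J (Type (max u v))) :=
  haveI : HasWeakSheafify J (Type (max u v)) := inferInstance
  haveI : HasColimitsOfShape (Discrete WalkingPair) (Type (max u v)) := inferInstance
  Sheaf.instHasColimitsOfShape

noncomputable def regCompare (J : GrothendieckTopology C) (Q : CDSquare C) :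
    (rho J Q.Y) ⨿ (pullback (rhoMap J Q.e) (rhoMap J Q.e)) ⟶
      pullback (rhoMap J Q.p) (rhoMap J Q.p) :=
  coprod.desc (pullback.lift (𝟙 _) (𝟙 _) rfl)
    (pullback.lift (pullback.fst _ _ ≫ rhoMap J Q.q) (pullback.snd _ _ ≫ rhoMap J Q.q)
      (by
        rw [Category.assoc, Category.assoc, ← rhoMap_comp, Q.w, rhoMap_comp,
          ← Category.assoc, ← Category.assoc, pullback.condition]))

/-- `P` is c-regular. -/
def IsCRegular (P : Set (CDSquare C)) : Prop :=
  ∀ Q ∈ P, IsPullback Q.q Q.e Q.p Q.i ∧ Mono Q.i ∧ Epi (regCompare (cTopology P) Q)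

/-- The image of a square under a functor. -/
@[simps]
def CDSquare.map (F : C ⥤ D) (Q : CDSquare C) : CDSquare D where
  B := F.obj Q.B
  A := F.obj Q.A
  Y := F.obj Q.Y
  X := F.obj Q.X
  e := F.map Q.e
  q := F.map Q.q
  i := F.map Q.i
  p := F.map Q.p
  w := by rw [← F.map_comp, ← F.map_comp, Q.w]

/-- The induced cd-structure on a slice category. -/
def sliceCd (P : Set (CDSquare C)) (X : C) : Set (CDSquare (Over X)) :=
  {Q | Q.map (Over.forget X) ∈ P}

/-- A dimension function on a category: an initial object `empty` together with a
dimension taking the minimal value `bot` exactly on objects isomorphic to `empty`. -/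
structure DimensionFunction (C : Type u) [Category.{v} C] (Λ : Type w) [Preorder Λ] where
  empty : C
  init : Nonempty (IsInitial empty)
  dim : C → Λ
  bot : Λ
  bot_le : ∀ X : C, bot ≤ dim X
  dim_eq_bot_iff : ∀ X : C, dim X = bot ↔ Nonempty (X ≅ empty)

/-- A cd-structure is compatible with a dimension function. -/
def CompatibleWithDim {Λ : Type w} [Preorder Λ] (P : Set (CDSquare C))
    (Dm : DimensionFunction C Λ) : Prop :=
  ∃ P' : Set (CDSquare C), P' ⊆ P ∧
    (∀ Q ∈ P', Dm.dim Q.A ≤ Dm.dim Q.X ∧ Dm.dim Q.Y ≤ Dm.dim Q.X ∧ Dm.dim Q.B < Dm.dim Q.X) ∧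
    ∀ Q ∈ P, ∃ R : Presieve Q.X, IsSimpleCover P' Q.X R ∧
      ∀ ⦃Z⦄ (g : Z ⟶ Q.X), R g → Q.sieve g

end CdFormal


namespace CdFormal

section Aux

variable {C : Type u} [Category.{v} C]

lemma cdSieve_mem (P : Set (CDSquare C)) {Q : CDSquare C} (hQ : Q ∈ P) :
    Q.sieve ∈ cTopology P Q.X := by
  rw [cTopology, GrothendieckTopology.mem_sInf]
  exact fun t ht => ht Q hQ

/-- The uplifted representable presheaf. -/
abbrev yp (Z : C) : Cᵒᵖ ⥤ Type (max u v) := yoneda.obj Z ⋙ uliftFunctor.{u}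

variable (J : GrothendieckTopology C)

/-- The canonical element of the sheafified representable presheaf. -/
noncomputable def el {V Z : C} (m : V ⟶ Z) : (rho J Z).val.obj (op V) :=
  (toSheafify J (yp Z)).app (op V) ⟨m⟩

lemma el_restrict {V' V Z : C} (h : V' ⟶ V) (m : V ⟶ Z) :
    (rho J Z).val.map h.op (el J m) = el J (h ≫ m) :=
  (types_congr_hom ((toSheafify J (yp Z)).naturality h.op) (ULift.up m)).symm

lemma rhoMap_el {V Z Z' : C} (m : V ⟶ Z) (g : Z ⟶ Z') :
    (rhoMap J g).hom.app (op V) (el J m) = el J (m ≫ g) := by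
  have h := congr_app (toSheafify_naturality (J := J)
    (Functor.whiskerRight (yoneda.map g) uliftFunctor.{u})) (op V)
  exact (types_congr_hom h (ULift.up m)).symm

lemma el_locally_eq {V Z : C} {m m' : V ⟶ Z} (h : el J m = el J m') :
    ∃ T ∈ J V, ∀ ⦃V'⦄ (f : V' ⟶ V), T f → f ≫ m = f ≫ m' := by
  refine ⟨Presheaf.equalizerSieve (F := yp Z) (X := op V) ⟨m⟩ ⟨m'⟩,
    Presheaf.IsLocallyInjective.equalizerSieve_mem (φ := toSheafify J (yp Z)) _ _ h, ?_⟩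
  intro V' f hf
  exact congr_arg ULift.down hf

end Aux

section Glue

variable {C : Type u} [Category.{v} C]

/-- The sieve witnessing that two maps to `Y` with equal composites to `X` are
"locally equal or locally come from `B`". -/
def glueSieve (Q : CDSquare C) {W : C} (k k' : W ⟶ Q.Y) : Sieve W where
  arrows Z f := (∃ b b' : Z ⟶ Q.B,
      b ≫ Q.q = f ≫ k ∧ b' ≫ Q.q = f ≫ k' ∧ b ≫ Q.e = b' ≫ Q.e) ∨ f ≫ k = f ≫ k'
  downward_closed := by
    rintro Z Z' f (⟨b, b', h1, h2, h3⟩ | h) g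
    · exact Or.inl ⟨g ≫ b, g ≫ b', by rw [Category.assoc, h1, Category.assoc],
        by rw [Category.assoc, h2, Category.assoc], by rw [Category.assoc, h3, Category.assoc]⟩
    · exact Or.inr (by rw [Category.assoc, h, Category.assoc])

lemma glueSieve_mem (J : GrothendieckTopology C) (Q : CDSquare C)
    (hepi : Epi (regCompare J Q)) {W : C} (k k' : W ⟶ Q.Y) (hkk : k ≫ Q.p = k' ≫ Q.p) :
    glueSieve Q k k' ∈ J W := by
  classical
  set α : rho J Q.Y ⟶ pullback (rhoMap J Q.p) (rhoMap J Q.p) :=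
    pullback.lift (𝟙 _) (𝟙 _) rfl with hα
  set β : pullback (rhoMap J Q.e) (rhoMap J Q.e) ⟶ pullback (rhoMap J Q.p) (rhoMap J Q.p) :=
    pullback.lift (pullback.fst _ _ ≫ rhoMap J Q.q) (pullback.snd _ _ ≫ rhoMap J Q.q)
      (by
        rw [Category.assoc, Category.assoc, ← rhoMap_comp, Q.w, rhoMap_comp,
          ← Category.assoc, ← Category.assoc, pullback.condition]) with hβ
  have hreg : regCompare J Q = coprod.desc α β := rfl
  -- the explicit presheaf coproduct
  let P0 : Cᵒᵖ ⥤ Type (max u v) :=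
    { obj := fun V => ULift.{u} (V.unop ⟶ Q.Y) ⊕
        (pullback (rhoMap J Q.e) (rhoMap J Q.e)).val.obj V
      map := fun f => ↾Sum.map (fun m => ⟨f.unop ≫ m.down⟩)
        ((pullback (rhoMap J Q.e) (rhoMap J Q.e)).val.map f)
      map_id := fun V => by
        ext x
        cases x with
        | inl m => simp
        | inr s => simp
      map_comp := fun f g => by
        ext x
        cases x with
        | inl m => simp
        | inr s => simp }
  let ψ : P0 ⟶ (pullback (rhoMap J Q.p) (rhoMap J Q.p)).val :=
    { app := fun V => ↾Sum.elim
        (fun m => α.hom.app V ((toSheafify J (yp Q.Y)).app V m)) (β.hom.app V)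
      naturality := fun V V' f => by
        ext x
        cases x with
        | inl m =>
          have h1 := types_congr_hom ((toSheafify J (yp Q.Y)).naturality f) m
          have h2 := types_congr_hom (α.hom.naturality f) ((toSheafify J (yp Q.Y)).app V m)
          dsimp at h1 h2 ⊢
          exact (congrArg (fun z => α.hom.app V' z) h1).trans h2
        | inr s =>
          exact types_congr_hom (β.hom.naturality f) s }
  let adj := sheafificationAdjunction J (Type (max u v))
  let ψhat : (presheafToSheaf J (Type (max u v))).obj P0 ⟶
      pullback (rhoMap J Q.p) (rhoMap J Q.p) := (adj.homEquiv P0 _).symm ψ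
  have hψfact : ψ = toSheafify J P0 ≫ ψhat.hom := by
    have h0 : adj.homEquiv P0 _ ψhat = ψ := (adj.homEquiv P0 _).apply_symm_apply ψ
    rw [Adjunction.homEquiv_unit] at h0
    exact h0.symm
  have hepiψ : Epi ψhat := by
    refine ⟨fun {Z} g h hgh => ?_⟩
    have key : ψ ≫ g.hom = ψ ≫ h.hom := by
      rw [hψfact, Category.assoc, Category.assoc, ← ObjectProperty.FullSubcategory.comp_hom,
        ← ObjectProperty.FullSubcategory.comp_hom, hgh]
    have hαgh : α ≫ g = α ≫ h := by
      apply (adj.homEquiv (yp Q.Y) Z).injective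
      erw [Adjunction.homEquiv_unit, Adjunction.homEquiv_unit]
      ext V x
      exact types_congr_hom (congr_app key V) (Sum.inl x)
    have hβgh : β ≫ g = β ≫ h := by
      apply Sheaf.hom_ext
      ext V s
      exact types_congr_hom (congr_app key V) (Sum.inr s)
    have hfinal : regCompare J Q ≫ g = regCompare J Q ≫ h := by
      rw [hreg]
      apply coprod.hom_ext
      · exact (coprod.inl_desc_assoc α β g).trans (hαgh.trans (coprod.inl_desc_assoc α β h).symm)
      · exact (coprod.inr_desc_assoc α β g).trans (hβgh.trans (coprod.inr_desc_assoc α β h).symm)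
    exact (cancel_epi (regCompare J Q)).1 hfinal
  haveI : Sheaf.IsLocallySurjective ψhat := (Sheaf.isLocallySurjective_iff_epi ψhat).2 hepiψ
  haveI hv : Presheaf.IsLocallySurjective J ψhat.hom := this
  haveI hψls : Presheaf.IsLocallySurjective J ψ := by
    rw [hψfact]; infer_instance
  -- the canonical section of the pullback
  have hLc : rhoMap J k ≫ rhoMap J Q.p = rhoMap J k' ≫ rhoMap J Q.p := by
    rw [← rhoMap_comp, ← rhoMap_comp, hkk]
  set L : rho J W ⟶ pullback (rhoMap J Q.p) (rhoMap J Q.p) := pullback.lift _ _ hLc with hL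
  set t := L.hom.app (op W) (el J (𝟙 W)) with ht
  have hfst_tf : ∀ {V : C} (f : V ⟶ W),
      (pullback.fst (rhoMap J Q.p) (rhoMap J Q.p)).hom.app (op V)
        ((pullback (rhoMap J Q.p) (rhoMap J Q.p)).val.map f.op t) = el J (f ≫ k) := by
    intro V f
    have h1 : L ≫ pullback.fst _ _ = rhoMap J k := pullback.lift_fst _ _ _
    have h2 := types_congr_hom (congr_app (congr_arg InducedCategory.Hom.hom h1) (op W)) (el J (𝟙 W))
    have h3 := types_congr_hom ((pullback.fst (rhoMap J Q.p) (rhoMap J Q.p)).hom.naturality f.op) t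
    rw [ObjectProperty.FullSubcategory.comp_hom] at h2
    dsimp at h2 h3
    rw [ht, h3, h2, rhoMap_el, Category.id_comp, el_restrict]
  have hsnd_tf : ∀ {V : C} (f : V ⟶ W),
      (pullback.snd (rhoMap J Q.p) (rhoMap J Q.p)).hom.app (op V)
        ((pullback (rhoMap J Q.p) (rhoMap J Q.p)).val.map f.op t) = el J (f ≫ k') := by
    intro V f
    have h1 : L ≫ pullback.snd _ _ = rhoMap J k' := pullback.lift_snd _ _ _
    have h2 := types_congr_hom (congr_app (congr_arg InducedCategory.Hom.hom h1) (op W)) (el J (𝟙 W))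
    have h3 := types_congr_hom ((pullback.snd (rhoMap J Q.p) (rhoMap J Q.p)).hom.naturality f.op) t
    rw [ObjectProperty.FullSubcategory.comp_hom] at h2
    dsimp at h2 h3
    rw [ht, h3, h2, rhoMap_el, Category.id_comp, el_restrict]
  refine J.transitive (Presheaf.imageSieve_mem J ψ t) _ ?_
  intro V f hf
  obtain ⟨σ, hσ⟩ := hf
  cases σ with
  | inl m0 =>
    obtain ⟨m⟩ := m0
    have hσ' : α.hom.app (op V) (el J m) =
        (pullback (rhoMap J Q.p) (rhoMap J Q.p)).val.map f.op t := hσ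
    have hαfst : α ≫ pullback.fst _ _ = 𝟙 _ := pullback.lift_fst _ _ _
    have hαsnd : α ≫ pullback.snd _ _ = 𝟙 _ := pullback.lift_snd _ _ _
    have e1 : el J m = el J (f ≫ k) := by
      have := types_congr_hom (congr_app (congr_arg InducedCategory.Hom.hom hαfst) (op V)) (el J m)
      rw [ObjectProperty.FullSubcategory.comp_hom] at this
      dsimp at this
      rw [← hfst_tf f, ← hσ', this]
    have e2 : el J m = el J (f ≫ k') := by
      have := types_congr_hom (congr_app (congr_arg InducedCategory.Hom.hom hαsnd) (op V)) (el J m)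
      rw [ObjectProperty.FullSubcategory.comp_hom] at this
      dsimp at this
      rw [← hsnd_tf f, ← hσ', this]
    obtain ⟨T, hT, hTp⟩ := el_locally_eq J (e1.symm.trans e2)
    refine J.superset_covering ?_ hT
    intro V' g hg
    exact Or.inr (by
      rw [Category.assoc, Category.assoc]
      exact hTp g hg)
  | inr s =>
    have hσ' : β.hom.app (op V) s =
        (pullback (rhoMap J Q.p) (rhoMap J Q.p)).val.map f.op t := hσ
    set b1 := (pullback.fst (rhoMap J Q.e) (rhoMap J Q.e)).hom.app (op V) s with hb1def
    set b2 := (pullback.snd (rhoMap J Q.e) (rhoMap J Q.e)).hom.app (op V) s with hb2def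
    have hq1 : (rhoMap J Q.q).hom.app (op V) b1 = el J (f ≫ k) := by
      have h1 := types_congr_hom (congr_app (congr_arg InducedCategory.Hom.hom
        (pullback.lift_fst (pullback.fst _ _ ≫ rhoMap J Q.q)
          (pullback.snd _ _ ≫ rhoMap J Q.q) _ : β ≫ pullback.fst _ _ = _)) (op V)) s
      rw [ObjectProperty.FullSubcategory.comp_hom, ObjectProperty.FullSubcategory.comp_hom] at h1
      dsimp at h1
      rw [← hfst_tf f, ← hσ', h1]
    have hq2 : (rhoMap J Q.q).hom.app (op V) b2 = el J (f ≫ k') := by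
      have h1 := types_congr_hom (congr_app (congr_arg InducedCategory.Hom.hom
        (pullback.lift_snd (pullback.fst _ _ ≫ rhoMap J Q.q)
          (pullback.snd _ _ ≫ rhoMap J Q.q) _ : β ≫ pullback.snd _ _ = _)) (op V)) s
      rw [ObjectProperty.FullSubcategory.comp_hom, ObjectProperty.FullSubcategory.comp_hom] at h1
      dsimp at h1
      rw [← hsnd_tf f, ← hσ', h1]
    have hbe : (rhoMap J Q.e).hom.app (op V) b1 = (rhoMap J Q.e).hom.app (op V) b2 := by
      have h1 := types_congr_hom (congr_app (congr_arg InducedCategory.Hom.hom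
        (pullback.condition (f := rhoMap J Q.e) (g := rhoMap J Q.e))) (op V)) s
      rw [ObjectProperty.FullSubcategory.comp_hom, ObjectProperty.FullSubcategory.comp_hom] at h1
      exact h1
    refine J.transitive (J.intersection_covering
      (Presheaf.imageSieve_mem J (toSheafify J (yp Q.B)) b1)
      (Presheaf.imageSieve_mem J (toSheafify J (yp Q.B)) b2)) _ ?_
    rintro V' h ⟨⟨m0, hm⟩, ⟨m0', hm'⟩⟩
    obtain ⟨m⟩ := m0
    obtain ⟨m'⟩ := m0'
    have hm : el J m = (rho J Q.B).val.map h.op b1 := hm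
    have hm' : el J m' = (rho J Q.B).val.map h.op b2 := hm'
    have e1 : el J (m ≫ Q.q) = el J (h ≫ (f ≫ k)) := by
      rw [← rhoMap_el J m Q.q, hm,
        NatTrans.naturality_apply (rhoMap J Q.q).hom h.op b1, hq1, el_restrict]
    have e2 : el J (m' ≫ Q.q) = el J (h ≫ (f ≫ k')) := by
      rw [← rhoMap_el J m' Q.q, hm',
        NatTrans.naturality_apply (rhoMap J Q.q).hom h.op b2, hq2, el_restrict]
    have e3 : el J (m ≫ Q.e) = el J (m' ≫ Q.e) := by
      rw [← rhoMap_el J m Q.e, ← rhoMap_el J m' Q.e, hm, hm',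
        NatTrans.naturality_apply (rhoMap J Q.e).hom h.op b1,
        NatTrans.naturality_apply (rhoMap J Q.e).hom h.op b2, hbe]
    obtain ⟨T1, hT1, hT1p⟩ := el_locally_eq J e1
    obtain ⟨T2, hT2, hT2p⟩ := el_locally_eq J e2
    obtain ⟨T3, hT3, hT3p⟩ := el_locally_eq J e3
    refine J.superset_covering ?_
      (J.intersection_covering (J.intersection_covering hT1 hT2) hT3)
    rintro V'' g ⟨⟨hg1, hg2⟩, hg3⟩
    refine Or.inl ⟨g ≫ m, g ≫ m', ?_, ?_, ?_⟩
    · have := hT1p g hg1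
      simp only [Category.assoc] at this ⊢
      exact this
    · have := hT2p g hg2
      simp only [Category.assoc] at this ⊢
      exact this
    · have := hT3p g hg3
      simp only [Category.assoc] at this ⊢
      exact this

end Glue

section Main

universe w'

variable {C : Type u} [Category.{v} C]

lemma existsUnique_section (P : Set (CDSquare C)) {Q : CDSquare C} (hQ : Q ∈ P)
    (hpb : IsPullback Q.q Q.e Q.p Q.i) (hmono : Mono Q.i)
    (hepi : Epi (regCompare (cTopology P) Q))
    {F : Cᵒᵖ ⥤ Type w'} (hF : Presieve.IsSheaf (cTopology P) F)
    (a : F.obj (op Q.A)) (y : F.obj (op Q.Y)) (hay : F.map Q.e.op a = F.map Q.q.op y) :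
    ∃! x : F.obj (op Q.X), F.map Q.i.op x = a ∧ F.map Q.p.op x = y := by
  classical
  haveI := hmono
  set J := cTopology P with hJdef
  have claimA : ∀ {Z : C} (h : Z ⟶ Q.A) (kk : Z ⟶ Q.Y), kk ≫ Q.p = h ≫ Q.i →
      F.map h.op a = F.map kk.op y := by
    intro Z h kk hcomm
    have hu1 : hpb.lift kk h hcomm ≫ Q.q = kk := hpb.lift_fst _ _ _
    have hu2 : hpb.lift kk h hcomm ≫ Q.e = h := hpb.lift_snd _ _ _
    calc F.map h.op a = F.map (hpb.lift kk h hcomm ≫ Q.e).op a := by rw [hu2]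
      _ = F.map (hpb.lift kk h hcomm).op (F.map Q.e.op a) := by
          rw [op_comp, FunctorToTypes.map_comp_apply]
      _ = F.map (hpb.lift kk h hcomm).op (F.map Q.q.op y) := by rw [hay]
      _ = F.map (hpb.lift kk h hcomm ≫ Q.q).op y := by
          rw [op_comp, FunctorToTypes.map_comp_apply]
      _ = F.map kk.op y := by rw [hu1]
  have claimY : ∀ {Z : C} (kk kk' : Z ⟶ Q.Y), kk ≫ Q.p = kk' ≫ Q.p →
      F.map kk.op y = F.map kk'.op y := by
    intro Z kk kk' hcomm
    refine ((hF _ (glueSieve_mem J Q hepi kk kk' hcomm)).isSeparatedFor).ext ?_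
    rintro V f (⟨b, b', hb, hb', hbe⟩ | hfe)
    · have h1 : F.map f.op (F.map kk.op y) = F.map b.op (F.map Q.q.op y) := by
        rw [← FunctorToTypes.map_comp_apply, ← FunctorToTypes.map_comp_apply,
          ← op_comp, ← op_comp, hb]
      have h2 : F.map f.op (F.map kk'.op y) = F.map b'.op (F.map Q.q.op y) := by
        rw [← FunctorToTypes.map_comp_apply, ← FunctorToTypes.map_comp_apply,
          ← op_comp, ← op_comp, hb']
      rw [h1, h2, ← hay, ← FunctorToTypes.map_comp_apply, ← FunctorToTypes.map_comp_apply,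
        ← op_comp, ← op_comp, hbe]
    · rw [← FunctorToTypes.map_comp_apply, ← FunctorToTypes.map_comp_apply,
        ← op_comp, ← op_comp, hfe]
  have hSX : Q.sieve ∈ J Q.X := cdSieve_mem P hQ
  set x : Presieve.FamilyOfElements F Q.sieve.arrows := fun Z g hg =>
    if hc : ∃ h : Z ⟶ Q.A, g = h ≫ Q.i then F.map hc.choose.op a
    else F.map (hg.resolve_left hc).choose.op y
    with hx
  have specA : ∀ {Z : C} (g : Z ⟶ Q.X) (hg : Q.sieve.arrows g) (h : Z ⟶ Q.A),
      g = h ≫ Q.i → x g hg = F.map h.op a := by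
    intro Z g hg h hgh
    have hc : ∃ h' : Z ⟶ Q.A, g = h' ≫ Q.i := ⟨h, hgh⟩
    rw [hx]
    dsimp only
    rw [dif_pos hc]
    have hch : hc.choose = h :=
      ((cancel_mono Q.i).1 (hgh.symm.trans hc.choose_spec)).symm
    rw [hch]
  have specY : ∀ {Z : C} (g : Z ⟶ Q.X) (hg : Q.sieve.arrows g) (kk : Z ⟶ Q.Y),
      g = kk ≫ Q.p → x g hg = F.map kk.op y := by
    intro Z g hg kk hgkk
    by_cases hc : ∃ h' : Z ⟶ Q.A, g = h' ≫ Q.i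
    · rw [hx]
      dsimp only
      rw [dif_pos hc]
      exact claimA hc.choose kk (by rw [← hc.choose_spec, hgkk])
    · rw [hx]
      dsimp only
      rw [dif_neg hc]
      exact claimY _ kk (by rw [← (hg.resolve_left hc).choose_spec, hgkk])
  have hxeq : ∀ {Z : C} (w w' : Z ⟶ Q.X) (hw : Q.sieve.arrows w) (hw' : Q.sieve.arrows w'),
      w = w' → x w hw = x w' hw' := by
    intro Z w w' hw hw' hww
    subst hww
    rfl
  have hrestrict : ∀ {Z Z' : C} (f : Z' ⟶ Z) (g : Z ⟶ Q.X) (hg : Q.sieve.arrows g)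
      (hg' : Q.sieve.arrows (f ≫ g)), F.map f.op (x g hg) = x (f ≫ g) hg' := by
    intro Z Z' f g hg hg'
    rcases id hg with ⟨h, hgh⟩ | ⟨kk, hgk⟩
    · rw [specA g hg h hgh, specA (f ≫ g) hg' (f ≫ h) (by rw [hgh, Category.assoc]),
        ← FunctorToTypes.map_comp_apply, ← op_comp]
    · rw [specY g hg kk hgk, specY (f ≫ g) hg' (f ≫ kk) (by rw [hgk, Category.assoc]),
        ← FunctorToTypes.map_comp_apply, ← op_comp]
  have hcompat : x.Compatible := by
    intro Y₁ Y₂ Z g₁ g₂ f₁ f₂ h₁ h₂ hcomm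
    rw [hrestrict g₁ f₁ h₁ (Q.sieve.downward_closed h₁ g₁),
      hrestrict g₂ f₂ h₂ (Q.sieve.downward_closed h₂ g₂)]
    exact hxeq _ _ (Q.sieve.downward_closed h₁ g₁) (Q.sieve.downward_closed h₂ g₂) hcomm
  obtain ⟨x0, hx0, hx0uniq⟩ := hF _ hSX x hcompat
  have hxi : F.map Q.i.op x0 = a := by
    have h0 := hx0 Q.i (Or.inl ⟨𝟙 _, (Category.id_comp _).symm⟩)
    rw [h0, specA Q.i (Or.inl ⟨𝟙 _, (Category.id_comp _).symm⟩) (𝟙 _) (Category.id_comp _).symm,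
      op_id, FunctorToTypes.map_id_apply]
  have hxp : F.map Q.p.op x0 = y := by
    have h0 := hx0 Q.p (Or.inr ⟨𝟙 _, (Category.id_comp _).symm⟩)
    rw [h0, specY Q.p (Or.inr ⟨𝟙 _, (Category.id_comp _).symm⟩) (𝟙 _) (Category.id_comp _).symm,
      op_id, FunctorToTypes.map_id_apply]
  refine ⟨x0, ⟨hxi, hxp⟩, ?_⟩
  rintro x1 ⟨h1a, h1p⟩
  refine ((hF _ hSX).isSeparatedFor).ext ?_
  rintro V f (⟨h, rfl⟩ | ⟨kk, rfl⟩)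
  · rw [op_comp, FunctorToTypes.map_comp_apply, FunctorToTypes.map_comp_apply, h1a, hxi]
  · rw [op_comp, FunctorToTypes.map_comp_apply, FunctorToTypes.map_comp_apply, h1p, hxp]

end Main

/-- If `P` is a c-regular cd-structure on `C` and `G : Cᵒᵖ ⥤ A` is a sheaf for the
associated c-topology, then `G` sends every distinguished square of `P` to a pullback
square in `A`. -/
theorem sends_distinguished_to_pullback_of_isSheaf
    {C : Type u} [Category.{v} C] {A : Type w} [Category.{v'} A]
    (P : Set (CDSquare C)) (hP : IsCRegular P) (G : Cᵒᵖ ⥤ A)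
    (hG : Presheaf.IsSheaf (cTopology P) G) :
    ∀ Q ∈ P,
      IsPullback (G.map Q.i.op) (G.map Q.p.op) (G.map Q.e.op) (G.map Q.q.op) := by
  intro Q hQ
  obtain ⟨hpb, hmono, hepi⟩ := hP Q hQ
  have w : G.map Q.i.op ≫ G.map Q.e.op = G.map Q.p.op ≫ G.map Q.q.op := by
    rw [← G.map_comp, ← G.map_comp, ← op_comp, ← op_comp, Q.w]
  have main : ∀ (E : A) (α : E ⟶ G.obj (op Q.A)) (β : E ⟶ G.obj (op Q.Y)),
      α ≫ G.map Q.e.op = β ≫ G.map Q.q.op →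
      ∃! x : E ⟶ G.obj (op Q.X), x ≫ G.map Q.i.op = α ∧ x ≫ G.map Q.p.op = β := by
    intro E α β hc
    exact existsUnique_section P hQ hpb hmono hepi (hG E) α β hc
  refine IsPullback.of_isLimit (PullbackCone.IsLimit.mk w
    (fun s => (main s.pt s.fst s.snd s.condition).exists.choose)
    (fun s => ((main s.pt s.fst s.snd s.condition).exists.choose_spec).1)
    (fun s => ((main s.pt s.fst s.snd s.condition).exists.choose_spec).2)
    (fun s mm hm1 hm2 =>
      (main s.pt s.fst s.snd s.condition).unique ⟨hm1, hm2⟩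
        (main s.pt s.fst s.snd s.condition).exists.choose_spec))

end CdFormal
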